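/- Let m ≥ 3 be odd with s = max{v₂(m+1), v₂(m−1)} ≥ 2. Then for every n ≥ 1 and every t ∈ ℤ₂ with t odd (a 2-adic unit), the 2-adic valuation of T_m(2^n t) − 2^n t equals n + s. -/

import Mathlib

open Polynomial Polynomial.Chebyshev

section identities
variable (R : Type*) [CommRing R]

theorem mulU (m k : ℤ) : 2 * T R m * U R k = U R (k + m) + U R (k - m) := by
  induction m using Polynomial.Chebyshev.induct with
  | zero => simp [two_mul]
  | one =>
    have h1 := U_add_one R k
    have h2 := U_sub_one R k
    rw [T_one]
    linear_combination -h1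
  | add_two m ih1 ih2 =>
    have h₁ := U_add_two R (k + m)
    have h₂ := U_sub_two R (k - m)
    have h₃ := T_add_two R m
    linear_combination (norm := ring_nf) 2 * U R k * h₃ + 2 * (X : R[X]) * ih1 - ih2 - h₁ - h₂
  | neg_add_one m ih1 ih2 =>
    have h₁ := U_add_two R (k + (-m - 1))
    have h₂ := U_sub_two R (k - (-m - 1))
    have h₃ := T_add_two R (-m - 1)
    linear_combination (norm := ring_nf) 2 * U R k * h₃ + 2 * (X : R[X]) * ih1 - ih2 - h₁ - h₂

theorem twoT (n : ℤ) : 2 * T R n = U R n - U R (n - 2) := by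
  have h1 := T_eq_U_sub_X_mul_U R n
  have h2 := U_sub_two R n
  linear_combination (norm := ring_nf) 2 * h1 + h2

theorem U_two_mul_add_one (j : ℤ) : U R (2 * j + 1) = 2 * T R (j + 1) * U R j := by
  have h := mulU R (j + 1) j
  have h2 : U R (j - (j + 1)) = 0 := by norm_num [U_neg_one]
  rw [h, h2]
  ring_nf

theorem four_mul_U_mul_U (a b : ℤ) :
    4 * (1 - X ^ 2) * U R a * U R b = 2 * T R (a - b) - 2 * T R (a + b + 2) := by
  have h1 := one_sub_X_sq_mul_U_eq_pol_in_T R a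
  have hbase : 2 * ((1 - X ^ 2) * U R a) = T R a - T R (a + 2) := by
    have h2 := T_add_two R a
    linear_combination (norm := ring_nf) 2 * h1 - h2
  have h3 := mulU R a b
  have h4 := mulU R (a + 2) b
  have h5 := twoT R (a - b)
  have h6 := twoT R (a + b + 2)
  have h7 := U_neg R (a - b)
  have h8 := U_neg_sub_two R (a - b)
  have e1 : U R (b - a) = -U R (a - b - 2) := by
    rw [show b - a = -(a - b) by ring] at *; exact h7
  have e2 : U R (b - a - 2) = -U R (a - b) := by
    rw [show b - a - 2 = -(a - b) - 2 by ring]; exact h8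
  calc 4 * (1 - X ^ 2) * U R a * U R b
      = (2 * ((1 - X ^ 2) * U R a)) * (2 * U R b) := by ring
    _ = (T R a - T R (a + 2)) * (2 * U R b) := by rw [hbase]
    _ = 2 * T R a * U R b - 2 * T R (a + 2) * U R b := by ring
    _ = (U R (b + a) + U R (b - a)) - (U R (b + (a + 2)) + U R (b - (a + 2))) := by
        rw [h3, h4]
    _ = (U R (a - b) - U R (a - b - 2)) - (U R (a + b + 2) - U R (a + b + 2 - 2)) := by
        rw [e1]
        rw [show b - (a + 2) = b - a - 2 by ring, e2]
        rw [show b + a = a + b + 2 - 2 by ring, show b + (a + 2) = a + b + 2 by ring]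
        ring
    _ = 2 * T R (a - b) - 2 * T R (a + b + 2) := by rw [← h5, ← h6]

end identities

section padic

lemma two_cast : ((2:ℕ) : ℤ_[2]) = 2 := by norm_cast

lemma prime_two : Prime (2 : ℤ_[2]) := by
  have := PadicInt.prime_p (p := 2)
  rwa [two_cast] at this

lemma unit_mul {a b : ℤ_[2]} (ha : ¬ (2:ℤ_[2]) ∣ a) (hb : ¬ (2:ℤ_[2]) ∣ b) :
    ¬ (2:ℤ_[2]) ∣ (a * b) := by
  intro h
  rcases prime_two.2.2 a b h with h' | h' <;> tauto

lemma not_two_dvd_one : ¬ (2:ℤ_[2]) ∣ (1:ℤ_[2]) := by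
  intro h
  have h2 := (PadicInt.norm_lt_one_iff_dvd (1 : ℤ_[2])).2 (by rwa [two_cast])
  simp at h2

lemma val_unit {c : ℤ_[2]} (hc : ¬ (2:ℤ_[2]) ∣ c) : c.valuation = 0 := by
  have hc0 : c ≠ 0 := by rintro rfl; exact hc (dvd_zero _)
  have h1 : ‖c‖ = 1 := by
    refine le_antisymm (PadicInt.norm_le_one c) ?_
    by_contra h
    push_neg at h
    exact hc (by rw [← two_cast]; exact (PadicInt.norm_lt_one_iff_dvd c).1 h)
  have h2 := PadicInt.norm_eq_zpow_neg_valuation hc0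
  rw [h1] at h2
  have h3 : ((2:ℕ):ℝ) ^ (-(c.valuation:ℤ)) = ((2:ℕ):ℝ) ^ (0:ℤ) := by
    rw [← h2]; norm_num
  have h4 := zpow_right_injective₀ (by norm_num : (0:ℝ) < ((2:ℕ):ℝ)) (by norm_num) h3
  omega

lemma unit_nonzero {c : ℤ_[2]} (hc : ¬ (2:ℤ_[2]) ∣ c) : c ≠ 0 := by
  rintro rfl; exact hc (dvd_zero _)

lemma val_pow_mul (k : ℕ) {c : ℤ_[2]} (hc : ¬ (2:ℤ_[2]) ∣ c) :
    ((2:ℤ_[2]) ^ k * c).valuation = k := by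
  have := PadicInt.valuation_p_pow_mul (p := 2) k c (unit_nonzero hc)
  rw [two_cast] at this
  rw [this, val_unit hc, add_zero]

-- T structure lemma
lemma T_eval_struct (x : ℤ_[2]) (j : ℕ) : ∃ c : ℤ_[2], ¬ (2:ℤ_[2]) ∣ c ∧
    (T ℤ_[2] j).eval x = if Even j then c else x * c := by
  induction j using Nat.strong_induction_on with
  | _ j ih =>
    match j with
    | 0 => exact ⟨1, not_two_dvd_one, by simp⟩
    | 1 => refine ⟨1, not_two_dvd_one, ?_⟩
           simp [T_one]
    | (j+2) =>
      obtain ⟨c0, hc0, h0⟩ := ih j (by omega)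
      obtain ⟨c1, hc1, h1⟩ := ih (j+1) (by omega)
      have hrec : (T ℤ_[2] ((j:ℤ)+2)).eval x
          = 2*x*((T ℤ_[2] ((j:ℤ)+1)).eval x) - (T ℤ_[2] (j:ℤ)).eval x := by
        rw [T_add_two]; simp
      have hcast : ((j+2:ℕ) : ℤ) = (j:ℤ) + 2 := by push_cast; ring
      have hcast1 : ((j+1:ℕ) : ℤ) = (j:ℤ) + 1 := by push_cast; ring
      rw [hcast1] at h1
      by_cases hj : Even j
      · have hj2 : Even (j+2) := by simpa [Nat.even_add] using hj
        have hj1 : ¬ Even (j+1) := by simpa [Nat.even_add] using hj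
        refine ⟨2*x*(x*c1) - c0, ?_, ?_⟩
        · intro h
          have : (2:ℤ_[2]) ∣ c0 := (dvd_sub_right ⟨x*(x*c1), by ring⟩).mp h
          exact hc0 this
        · rw [if_pos hj2, hcast, hrec, h0, h1, if_pos hj, if_neg hj1]
      · have hj2 : ¬ Even (j+2) := by simpa [Nat.even_add] using hj
        have hj1 : Even (j+1) := by simpa [Nat.even_add] using hj
        refine ⟨2*c1 - c0, ?_, ?_⟩
        · intro h
          have : (2:ℤ_[2]) ∣ c0 := (dvd_sub_right ⟨c1, by ring⟩).mp h
          exact hc0 this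
        · rw [if_neg hj2, hcast, hrec, h0, h1, if_pos hj1, if_neg hj]
          ring

lemma T_eval_even (x : ℤ_[2]) (j : ℕ) (hj : Even j) : ∃ c : ℤ_[2], ¬ (2:ℤ_[2]) ∣ c ∧
    (T ℤ_[2] j).eval x = c := by
  obtain ⟨c, hc, h⟩ := T_eval_struct x j
  exact ⟨c, hc, by rwa [if_pos hj] at h⟩

lemma T_eval_odd (x : ℤ_[2]) (j : ℕ) (hj : ¬ Even j) : ∃ c : ℤ_[2], ¬ (2:ℤ_[2]) ∣ c ∧
    (T ℤ_[2] j).eval x = x * c := by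
  obtain ⟨c, hc, h⟩ := T_eval_struct x j
  exact ⟨c, hc, by rwa [if_neg hj] at h⟩

-- U unit lemma for even index
lemma U_eval_even (x : ℤ_[2]) (j : ℕ) (hj : Even j) : ∃ c : ℤ_[2], ¬ (2:ℤ_[2]) ∣ c ∧
    (U ℤ_[2] j).eval x = c := by
  induction j using Nat.strong_induction_on with
  | _ j ih =>
    match j, hj with
    | 0, _ => exact ⟨1, not_two_dvd_one, by simp⟩
    | 1, h => exact absurd h (by simp)
    | (j+2), hj2 =>
      have hj : Even j := by simpa [Nat.even_add] using hj2
      obtain ⟨c0, hc0, h0⟩ := ih j (by omega) hj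
      have hrec : (U ℤ_[2] ((j:ℤ)+2)).eval x
          = 2*x*((U ℤ_[2] ((j:ℤ)+1)).eval x) - (U ℤ_[2] (j:ℤ)).eval x := by
        rw [U_add_two]; simp
      have hcast : ((j+2:ℕ) : ℤ) = (j:ℤ) + 2 := by push_cast; ring
      refine ⟨2*x*((U ℤ_[2] ((j:ℤ)+1)).eval x) - c0, ?_, ?_⟩
      · intro h
        have : (2:ℤ_[2]) ∣ c0 :=
          (dvd_sub_right ⟨x*((U ℤ_[2] ((j:ℤ)+1)).eval x), by ring⟩).mp h
        exact hc0 this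
      · rw [hcast, hrec, h0]

end padic

section part3

lemma U_eval_even_k (x : ℤ_[2]) (hx : (2:ℤ_[2]) ∣ x) :
    ∀ k : ℕ, 1 ≤ k → Even k → ∃ c : ℤ_[2], ¬(2:ℤ_[2]) ∣ c ∧
      (U ℤ_[2] ((k:ℤ) - 1)).eval x = 2 ^ (padicValNat 2 k) * x * c := by
  intro k
  induction k using Nat.strong_induction_on with
  | _ k ih =>
    intro hk1 hke
    obtain ⟨j, rfl⟩ : ∃ j, k = 2 * j := by
      obtain ⟨j, hj⟩ := hke; exact ⟨j, by omega⟩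
    have hj1 : 1 ≤ j := by omega
    have hident := U_two_mul_add_one ℤ_[2] ((j:ℤ) - 1)
    have hidx : 2 * ((j:ℤ) - 1) + 1 = ((2*j:ℕ):ℤ) - 1 := by push_cast; ring
    have hidx2 : (j:ℤ) - 1 + 1 = (j:ℤ) := by ring
    rw [hidx, hidx2] at hident
    have heval : (U ℤ_[2] (((2*j:ℕ):ℤ) - 1)).eval x
        = 2 * (T ℤ_[2] (j:ℤ)).eval x * (U ℤ_[2] ((j:ℤ) - 1)).eval x := by
      rw [hident]; simp
    have hval : padicValNat 2 (2*j) = 1 + padicValNat 2 j := by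
      rw [padicValNat.mul (by norm_num) (by omega), padicValNat.self (by norm_num)]
    by_cases hje : Even j
    · obtain ⟨c1, hc1, h1⟩ := T_eval_even x j hje
      obtain ⟨c2, hc2, h2⟩ := ih j (by omega) hj1 hje
      refine ⟨c1 * c2, unit_mul hc1 hc2, ?_⟩
      rw [heval, h1, h2, hval]
      ring
    · obtain ⟨c1, hc1, h1⟩ := T_eval_odd x j hje
      have hj1e : Even (j - 1) := by
        rcases Nat.even_or_odd j with h | h
        · exact absurd h hje
        · exact Nat.Odd.sub_odd h odd_one
      obtain ⟨c2, hc2, h2⟩ := U_eval_even x (j-1) hj1e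
      have hcast : ((j:ℤ) - 1) = ((j - 1 : ℕ) : ℤ) := by
        rw [Nat.cast_sub hj1]; norm_num
      rw [hcast] at heval
      have hjmod : j % 2 = 1 := Nat.odd_iff.mp (Nat.not_even_iff_odd.mp hje)
      have hv0 : padicValNat 2 j = 0 :=
        padicValNat.eq_zero_of_not_dvd (by omega)
      refine ⟨c1 * c2, unit_mul hc1 hc2, ?_⟩
      rw [heval, h1, h2, hval, hv0]
      ring

theorem chebyshev_valuation_near_zero (m : ℕ) (hm : 3 ≤ m) (hodd : Odd m)
    (s : ℕ) (hs : s = max (padicValNat 2 (m + 1)) (padicValNat 2 (m - 1)))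
    (n : ℕ) (hn : 1 ≤ n) (t : ℤ_[2]) (ht : ¬ (2 : ℤ_[2]) ∣ t) :
    ((Polynomial.Chebyshev.T ℤ_[2] m).eval (2 ^ n * t) - 2 ^ n * t).valuation
      = (n : ℤ) + (s : ℤ) := by
  obtain ⟨l, hl⟩ := hodd
  set x : ℤ_[2] := 2 ^ n * t with hxdef
  have hx : (2:ℤ_[2]) ∣ x := by
    refine Dvd.dvd.mul_right ?_ t
    exact dvd_pow_self 2 (by omega)
  have hx2 : (2:ℤ_[2]) ∣ x^2 := by rw [sq]; exact hx.mul_right x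
  have hux : ¬ (2:ℤ_[2]) ∣ (1 - x^2) := by
    intro h
    exact not_two_dvd_one (by
      have := dvd_add h hx2
      simpa using this)
  obtain ⟨j, hj⟩ : ∃ j, m = 2 * j + 3 := ⟨l - 1, by omega⟩
  have hid := four_mul_U_mul_U ℤ_[2] ((j:ℤ) + 1) (j:ℤ)
  have hidx1 : (j:ℤ) + 1 - (j:ℤ) = 1 := by ring
  have hidx2 : (j:ℤ) + 1 + (j:ℤ) + 2 = ((m:ℕ):ℤ) := by push_cast [hj]; ring
  rw [hidx1, hidx2] at hid
  have hid' := congrArg (Polynomial.eval x) hid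
  simp only [eval_mul, eval_sub, eval_add, eval_pow, eval_one, eval_X, eval_ofNat,
    T_one] at hid'
  have key : (T ℤ_[2] (m:ℕ)).eval x - x
      = (-2) * (1 - x^2) * ((U ℤ_[2] ((j:ℤ) + 1)).eval x) * ((U ℤ_[2] (j:ℤ)).eval x) := by
    have h2 : (2:ℤ_[2]) * ((T ℤ_[2] (m:ℕ)).eval x - x)
        = 2 * ((-2) * (1 - x^2) * ((U ℤ_[2] ((j:ℤ) + 1)).eval x)
            * ((U ℤ_[2] (j:ℤ)).eval x)) := by linear_combination hid'
    exact mul_left_cancel₀ prime_two.ne_zero h2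
  by_cases hje : Even j
  · obtain ⟨c2, hc2, h2⟩ := U_eval_even x j hje
    have hk2 : Even (j + 2) := by simpa [Nat.even_add] using hje
    obtain ⟨c1, hc1, h1⟩ := U_eval_even_k x hx (j+2) (by omega) hk2
    have hcast : ((j+2:ℕ):ℤ) - 1 = (j:ℤ) + 1 := by push_cast; ring
    rw [hcast] at h1
    set v := padicValNat 2 (j+2) with hv
    have hsval : s = v + 1 := by
      have hm1 : m + 1 = 2 * (j + 2) := by omega
      have hm2 : m - 1 = 2 * (j + 1) := by omega
      have hja : ¬ (2 ∣ (j+1)) := by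
        rcases hje with ⟨r, hr⟩; omega
      rw [hs, hm1, hm2,
        padicValNat.mul (by norm_num) (by omega),
        padicValNat.mul (by norm_num) (by omega),
        padicValNat.self (by norm_num),
        padicValNat.eq_zero_of_not_dvd hja]
      omega
    have hu : ¬ (2:ℤ_[2]) ∣ (-((1 - x^2) * c1 * c2 * t)) := by
      rw [dvd_neg]
      exact unit_mul (unit_mul (unit_mul hux hc1) hc2) ht
    have hform : (T ℤ_[2] (m:ℕ)).eval x - x
        = 2 ^ (n + s) * (-((1 - x^2) * c1 * c2 * t)) := by
      rw [key, h1, h2, hsval, hxdef]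
      ring
    rw [hform, val_pow_mul (n + s) hu]
    push_cast; ring
  · have hk1 : Even (j + 1) := Odd.add_one (Nat.not_even_iff_odd.mp hje)
    obtain ⟨c1, hc1, h1⟩ := U_eval_even x (j+1) hk1
    have hcast1 : ((j+1:ℕ):ℤ) = (j:ℤ) + 1 := by push_cast; ring
    rw [hcast1] at h1
    obtain ⟨c2, hc2, h2⟩ := U_eval_even_k x hx (j+1) (by omega) hk1
    have hcast2 : ((j+1:ℕ):ℤ) - 1 = (j:ℤ) := by push_cast; ring
    rw [hcast2] at h2
    set v := padicValNat 2 (j+1) with hv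
    have hsval : s = v + 1 := by
      have hm1 : m + 1 = 2 * (j + 2) := by omega
      have hm2 : m - 1 = 2 * (j + 1) := by omega
      have hja : ¬ (2 ∣ (j+2)) := by
        rcases hk1 with ⟨r, hr⟩; omega
      rw [hs, hm1, hm2,
        padicValNat.mul (by norm_num) (by omega),
        padicValNat.mul (by norm_num) (by omega),
        padicValNat.self (by norm_num),
        padicValNat.eq_zero_of_not_dvd hja]
      omega
    have hu : ¬ (2:ℤ_[2]) ∣ (-((1 - x^2) * c1 * c2 * t)) := by
      rw [dvd_neg]
      exact unit_mul (unit_mul (unit_mul hux hc1) hc2) ht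
    have hform : (T ℤ_[2] (m:ℕ)).eval x - x
        = 2 ^ (n + s) * (-((1 - x^2) * c1 * c2 * t)) := by
      rw [key, h1, h2, hsval, hxdef]
      ring
    rw [hform, val_pow_mul (n + s) hu]
    push_cast; ring

end part3
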